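/- In an abelian group G equipped with its Bohr topology, every subgroup H is h-embedded and the subspace topology on H coincides with the Bohr topology of H. -/
import Mathlib

/-- The Bohr topology of an abelian group. -/
noncomputable def bohrTopology (A : Type*) [AddCommGroup A] : TopologicalSpace A :=
  ⨅ φ : A →+ AddCircle (1 : ℝ), TopologicalSpace.induced φ inferInstance

/-- In an abelian group with its Bohr topology, every subgroup is h-embedded
and its subspace topology coincides with its own Bohr topology. -/
theorem subgroup_h_embedded_in_bohr {G : Type*} [AddCommGroup G]
    (H : AddSubgroup G) :
    (∀ φ : H →+ AddCircle (1 : ℝ), ∃ ψ : G →+ AddCircle (1 : ℝ),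
      @Continuous G (AddCircle (1 : ℝ)) (bohrTopology G) inferInstance ψ ∧ ∀ x : H, ψ x = φ x) ∧
    TopologicalSpace.induced (Subtype.val : H → G) (bohrTopology G) =
      bohrTopology H := by
  have ext : ∀ φ : H →+ AddCircle (1 : ℝ), ∃ ψ : G →+ AddCircle (1 : ℝ), ∀ x : H, ψ x = φ x := by
    intro φ
    obtain ⟨ψ, hψ⟩ := (Module.Baer.of_divisible (AddCircle (1 : ℝ))).extension_property_addMonoidHom
      H.subtype Subtype.val_injective φ
    exact ⟨ψ, fun x => DFunLike.congr_fun hψ x⟩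
  constructor
  · intro φ
    obtain ⟨ψ, hψ⟩ := ext φ
    exact ⟨ψ, continuous_iff_le_induced.mpr (iInf_le _ ψ), hψ⟩
  · rw [bohrTopology, bohrTopology, induced_iInf]
    apply le_antisymm
    · refine le_iInf fun φ => ?_
      obtain ⟨ψ, hψ⟩ := ext φ
      refine le_trans (iInf_le _ ψ) ?_
      rw [induced_compose]
      have : (⇑ψ ∘ Subtype.val : H → AddCircle (1 : ℝ)) = ⇑φ := funext hψ
      rw [this]
    · refine le_iInf fun ψ => ?_
      rw [induced_compose]
      exact iInf_le _ (ψ.comp H.subtype)
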